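/- For H ∈ (1/2, 1), the constant c_H := (H(2H−1) / B(2−2H, H−1/2))^{1/2} satisfies c_H² ∫_ℝ (u − y)₊^{H−3/2} (v − y)₊^{H−3/2} dy = H(2H−1) |u − v|^{2H−2} for all u ≠ v in ℝ. -/

import Mathlib

open MeasureTheory

/-- The real Beta function. -/
noncomputable def betaFn (a b : ℝ) : ℝ := Real.Gamma a * Real.Gamma b / Real.Gamma (a + b)

lemma betaFn_pos {a b : ℝ} (ha : 0 < a) (hb : 0 < b) : 0 < betaFn a b :=
  div_pos (mul_pos (Real.Gamma_pos_of_pos ha) (Real.Gamma_pos_of_pos hb))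
    (Real.Gamma_pos_of_pos (by linarith))

/-- The real Beta function as an integral over `(0,1)`. -/
lemma betaFn_eq_integral {a b : ℝ} (ha : 0 < a) (hb : 0 < b) :
    betaFn a b = ∫ x in Set.Ioo (0:ℝ) 1, x ^ (a - 1) * (1 - x) ^ (b - 1) := by
  have hGa : Complex.Gamma a * Complex.Gamma b
      = Complex.Gamma (a + b) * Complex.betaIntegral a b :=
    Complex.Gamma_mul_Gamma_eq_betaIntegral (by simpa using ha) (by simpa using hb)
  have hbeta : Complex.betaIntegral (a : ℂ) (b : ℂ)
      = ((∫ x in Set.Ioo (0:ℝ) 1, x ^ (a - 1) * (1 - x) ^ (b - 1) : ℝ) : ℂ) := by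
    rw [Complex.betaIntegral]
    have : ∀ x ∈ Set.uIcc (0:ℝ) 1,
        (x : ℂ) ^ ((a:ℂ) - 1) * ((1:ℂ) - x) ^ ((b:ℂ) - 1)
          = ((x ^ (a - 1) * (1 - x) ^ (b - 1) : ℝ) : ℂ) := by
      intro x hx
      rw [Set.uIcc_of_le (by norm_num : (0:ℝ) ≤ 1)] at hx
      push_cast
      rw [Complex.ofReal_cpow hx.1, Complex.ofReal_cpow (by linarith [hx.2] : (0:ℝ) ≤ 1 - x)]
      push_cast
      ring
    rw [intervalIntegral.integral_congr (fun x hx => this x hx),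
      intervalIntegral.integral_ofReal]
    congr 1
    rw [intervalIntegral.integral_of_le (by norm_num : (0:ℝ) ≤ 1),
      integral_Ioc_eq_integral_Ioo]
  rw [hbeta] at hGa
  rw [show ((a:ℂ) + b) = ((a + b : ℝ) : ℂ) by push_cast; ring, Complex.Gamma_ofReal,
    Complex.Gamma_ofReal, Complex.Gamma_ofReal] at hGa
  have h2 : Real.Gamma a * Real.Gamma b
      = Real.Gamma (a + b) * ∫ x in Set.Ioo (0:ℝ) 1, x ^ (a - 1) * (1 - x) ^ (b - 1) := by
    exact_mod_cast hGa
  rw [betaFn, div_eq_iff (Real.Gamma_pos_of_pos (show (0:ℝ) < a + b by linarith)).ne', h2]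
  ring

lemma key_integral (H : ℝ) (hH : H ∈ Set.Ioo (1/2 : ℝ) 1) (u v : ℝ) (hvu : v < u) :
    ∫ y : ℝ, (max (u - y) 0) ^ (H - 3/2) * (max (v - y) 0) ^ (H - 3/2)
      = betaFn (2 - 2 * H) (H - 1/2) * (u - v) ^ (2 * H - 2) := by
  obtain ⟨hH1, hH2⟩ := hH
  set a : ℝ := u - v with ha_def
  have ha : 0 < a := by simp only [ha_def]; linarith
  set p : ℝ := H - 3/2 with hp_def
  have hpne : p ≠ 0 := by rw [hp_def]; intro h; nlinarith
  set f : ℝ → ℝ := fun y => (max (u - y) 0) ^ p * (max (v - y) 0) ^ p with hf_def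
  -- the integrand vanishes outside Iio v
  have hsupp : Function.support f ⊆ Set.Iio v := by
    intro y hy
    by_contra h
    simp only [Set.mem_Iio, not_lt] at h
    apply hy
    have : max (v - y) 0 = 0 := by simp; linarith
    simp [hf_def, this, Real.zero_rpow hpne]
  have h1 : ∫ y : ℝ, f y = ∫ y in Set.Iio v, f y := by
    rw [← integral_indicator measurableSet_Iio, Set.indicator_eq_self.mpr hsupp]
  -- change of variables y = u - a / x
  set φ : ℝ → ℝ := fun x => u - a / x with hφ_def
  have himg : φ '' Set.Ioo 0 1 = Set.Iio v := by
    ext y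
    constructor
    · rintro ⟨x, ⟨hx0, hx1⟩, rfl⟩
      simp only [Set.mem_Iio, hφ_def]
      have : a < a / x := by
        rw [lt_div_iff₀ hx0]; nlinarith
      simp only [ha_def] at this ⊢
      linarith
    · intro hy
      simp only [Set.mem_Iio] at hy
      have huy : 0 < u - y := by simp only [ha_def] at ha ⊢; linarith
      refine ⟨a / (u - y), ⟨by positivity, ?_⟩, ?_⟩
      · rw [div_lt_one huy]; simp only [ha_def]; linarith
      · simp only [hφ_def]
        have hinv : a / (a / (u - y)) = u - y := by field_simp
        rw [hinv]; ring
  have hderiv : ∀ x ∈ Set.Ioo (0:ℝ) 1, HasDerivWithinAt φ (a / x ^ 2) (Set.Ioo 0 1) x := by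
    intro x hx
    have hx0 : x ≠ 0 := hx.1.ne'
    have h := ((hasDerivAt_inv hx0).const_mul a).const_sub u
    have heq : (fun x : ℝ => u - a * x⁻¹) = φ := by
      funext t; simp [hφ_def, div_eq_mul_inv]
    rw [heq] at h
    have : -(a * -(x ^ 2)⁻¹) = a / x ^ 2 := by field_simp
    rw [this] at h
    exact h.hasDerivWithinAt
  have hinj : Set.InjOn φ (Set.Ioo 0 1) := by
    intro x hx y hy hxy
    have hx0 := hx.1.ne'
    have hy0 := hy.1.ne'
    have h : a / x = a / y := by
      have := hxy
      simp only [hφ_def, sub_right_inj] at this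
      exact this
    rw [div_eq_div_iff hx0 hy0] at h
    exact mul_left_cancel₀ ha.ne' (by linarith)
  have h2 : ∫ y in Set.Iio v, f y
      = ∫ x in Set.Ioo (0:ℝ) 1, |a / x ^ 2| • f (φ x) := by
    rw [← himg]
    exact integral_image_eq_integral_abs_deriv_smul measurableSet_Ioo hderiv hinj f
  have h3 : ∀ x ∈ Set.Ioo (0:ℝ) 1, |a / x ^ 2| • f (φ x)
      = (a ^ (2 * H - 2)) * (x ^ (2 - 2 * H - 1) * (1 - x) ^ (H - 1/2 - 1)) := by
    intro x hx
    obtain ⟨hx0, hx1⟩ := hx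
    have hux : u - φ x = a / x := by simp [hφ_def]
    have hvx : v - φ x = a * (1 - x) / x := by
      simp only [hφ_def, ha_def]; field_simp; ring
    have h1x : 0 < 1 - x := by linarith
    have hax : 0 < a / x := by positivity
    have hbx : 0 < a * (1 - x) / x := by positivity
    have hxp : (0:ℝ) < x ^ p := Real.rpow_pos_of_pos hx0 p
    rw [smul_eq_mul, hf_def]
    simp only [hux, hvx, max_eq_left hax.le, max_eq_left hbx.le,
      abs_of_pos (show (0:ℝ) < a / x ^ 2 by positivity)]
    rw [Real.div_rpow ha.le hx0.le, Real.div_rpow (by positivity) hx0.le,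
      Real.mul_rpow ha.le h1x.le]
    have main : a / x ^ 2 * (a ^ p / x ^ p * (a ^ p * (1 - x) ^ p / x ^ p))
        = (a ^ p * a ^ p * a) * (1 - x) ^ p * (x ^ 2 * (x ^ p * x ^ p))⁻¹ := by
      field_simp
    rw [main]
    have e1 : a ^ p * a ^ p * a = a ^ (2 * H - 2) := by
      rw [← Real.rpow_add ha, ← Real.rpow_add_one ha.ne']
      congr 1; rw [hp_def]; ring
    have e2 : x ^ 2 * (x ^ p * x ^ p) = x ^ ((2:ℝ) + (p + p)) := by
      rw [Real.rpow_add hx0, Real.rpow_add hx0, Real.rpow_two]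
    have e3 : (x ^ ((2:ℝ) + (p + p)))⁻¹ = x ^ (2 - 2 * H - 1) := by
      rw [← Real.rpow_neg hx0.le]
      congr 1; rw [hp_def]; ring
    have e4 : (1 - x) ^ p = (1 - x) ^ (H - 1/2 - 1) := by
      congr 1; rw [hp_def]; ring
    rw [e1, e2, e3, e4]; ring
  have h4 : ∫ x in Set.Ioo (0:ℝ) 1, |a / x ^ 2| • f (φ x)
      = a ^ (2 * H - 2) * ∫ x in Set.Ioo (0:ℝ) 1,
          x ^ (2 - 2 * H - 1) * (1 - x) ^ (H - 1/2 - 1) := by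
    rw [setIntegral_congr_fun measurableSet_Ioo h3, MeasureTheory.integral_const_mul]
  rw [h1, h2, h4, ← betaFn_eq_integral (by linarith) (by linarith)]
  ring

theorem stmt2 (H : ℝ) (hH : H ∈ Set.Ioo (1/2 : ℝ) 1) (u v : ℝ) (huv : u ≠ v) :
    (Real.sqrt (H * (2 * H - 1) / betaFn (2 - 2 * H) (H - 1/2))) ^ 2 *
        ∫ y : ℝ, (max (u - y) 0) ^ (H - 3/2) * (max (v - y) 0) ^ (H - 3/2) =
      H * (2 * H - 1) * |u - v| ^ (2 * H - 2) := by
  obtain ⟨hH1, hH2⟩ := hH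
  set B := betaFn (2 - 2 * H) (H - 1/2) with hB_def
  have hB : 0 < B :=
    betaFn_pos (by linarith) (by linarith)
  have hsq : (Real.sqrt (H * (2 * H - 1) / B)) ^ 2
      = H * (2 * H - 1) / B := by
    apply Real.sq_sqrt
    have : 0 < H * (2 * H - 1) := by nlinarith
    positivity
  rw [hsq]
  rcases huv.lt_or_gt with h | h
  · -- u < v
    have key := key_integral H ⟨hH1, hH2⟩ v u h
    have hcomm : (∫ y : ℝ, (max (u - y) 0) ^ (H - 3/2) * (max (v - y) 0) ^ (H - 3/2))
        = ∫ y : ℝ, (max (v - y) 0) ^ (H - 3/2) * (max (u - y) 0) ^ (H - 3/2) := by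
      congr 1; funext y; ring
    rw [hcomm, key, ← hB_def, abs_of_neg (by linarith : u - v < 0),
      show -(u - v) = v - u by ring]
    field_simp
  · have key := key_integral H ⟨hH1, hH2⟩ u v h
    rw [key, ← hB_def, abs_of_pos (by linarith : 0 < u - v)]
    field_simp
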